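/- For the element δ = ∏_{i≠j}(v_i − v_j) in ℤ[v_1,…,v_p] (p an odd prime), the ring homomorphism Θ_p: ℤ[v_1,…,v_p] → ℤ[η]/(pη) defined by Θ_p(v_i) = i·η satisfies Θ_p(δ) ≡ −η^{p²−p} mod (pη), which is nonzero in ℤ[η]/(pη). -/

import Mathlib

open MvPolynomial

/-- The ring ℤ[η]/(pη). -/
abbrev Rq (p : ℕ) : Type := Polynomial ℤ ⧸ Ideal.span {(p : Polynomial ℤ) * Polynomial.X}

/-- The class of η in ℤ[η]/(pη). -/
noncomputable def eta (p : ℕ) : Rq p :=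
  Ideal.Quotient.mk (Ideal.span {(p : Polynomial ℤ) * Polynomial.X}) Polynomial.X

lemma prod_erase_zero (p : ℕ) [Fact p.Prime] :
    ∏ a ∈ (Finset.univ : Finset (ZMod p)).erase 0, a = -1 := by
  have hp : p.Prime := Fact.out
  rw [← ZMod.prod_Ico_one_prime p]
  refine (Finset.prod_nbij (fun x : ℕ => (x : ZMod p)) ?_ ?_ ?_ ?_).symm
  · intro a ha
    rw [Finset.mem_Ico] at ha
    refine Finset.mem_erase.2 ⟨?_, Finset.mem_univ _⟩
    intro h
    rw [ZMod.natCast_eq_zero_iff] at h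
    exact absurd (Nat.le_of_dvd (by omega) h) (by omega)
  · intro a ha b hb h
    simp only [Finset.coe_Ico, Set.mem_Ico] at ha hb
    have := congrArg ZMod.val h
    rwa [ZMod.val_cast_of_lt ha.2, ZMod.val_cast_of_lt hb.2] at this
  · intro b hb
    simp only [Finset.coe_erase, Set.mem_diff, Finset.coe_univ] at hb
    have hb0 : b ≠ 0 := by simpa using hb.2
    refine ⟨b.val, ?_, ?_⟩
    · simp only [Finset.coe_Ico, Set.mem_Ico]
      haveI : NeZero p := ⟨hp.ne_zero⟩
      refine ⟨?_, ZMod.val_lt b⟩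
      rcases Nat.eq_zero_or_pos b.val with h | h
      · exact absurd ((ZMod.val_eq_zero b).1 h) hb0
      · omega
    · simp [ZMod.natCast_val, ZMod.cast_id]
  · intro a _; rfl

lemma inner_prod (p : ℕ) [Fact p.Prime] (i : Fin p) :
    ∏ j ∈ (Finset.univ : Finset (Fin p)).erase i,
      (((i : ℕ) : ZMod p) - ((j : ℕ) : ZMod p)) = -1 := by
  have hp : p.Prime := Fact.out
  haveI : NeZero p := ⟨hp.ne_zero⟩
  have hf : Function.Injective fun j : Fin p => ((j : ℕ) : ZMod p) := by
    intro a b h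
    have := congrArg ZMod.val h
    rw [ZMod.val_cast_of_lt a.isLt, ZMod.val_cast_of_lt b.isLt] at this
    exact Fin.ext this
  set e : Fin p → ZMod p := fun j => ((i : ℕ) : ZMod p) - ((j : ℕ) : ZMod p) with he
  have hei : Function.Injective e := by
    intro a b h
    apply hf
    exact sub_right_injective h
  have himg : Finset.univ.image e = (Finset.univ : Finset (ZMod p)) := by
    apply Finset.eq_univ_of_card
    rw [Finset.card_image_of_injective _ hei, Finset.card_univ,
      Fintype.card_fin, ZMod.card p]

  have h2 : ((Finset.univ : Finset (Fin p)).erase i).image e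
      = (Finset.univ : Finset (ZMod p)).erase 0 := by
    rw [Finset.image_erase hei, himg, he]
    simp
  calc ∏ j ∈ (Finset.univ : Finset (Fin p)).erase i,
        (((i : ℕ) : ZMod p) - ((j : ℕ) : ZMod p))
      = ∏ a ∈ ((Finset.univ : Finset (Fin p)).erase i).image e, a := by
        rw [Finset.prod_image (fun a _ b _ h => hei h)]
    _ = -1 := by rw [h2]; exact prod_erase_zero p

lemma key_dvd (p : ℕ) (hp : p.Prime) (hodd : Odd p) :
    (p : ℤ) ∣ (∏ x ∈ (Finset.univ : Finset (Fin p)).offDiag,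
      (((x.1 : ℕ) : ℤ) - ((x.2 : ℕ) : ℤ))) + 1 := by
  haveI := Fact.mk hp
  rw [← ZMod.intCast_zmod_eq_zero_iff_dvd]
  push_cast
  have hsplit : ∏ x ∈ (Finset.univ : Finset (Fin p)).offDiag,
      (((x.1 : ℕ) : ZMod p) - ((x.2 : ℕ) : ZMod p)) = -1 := by
    have hoff : (Finset.univ : Finset (Fin p)).offDiag
        = (Finset.univ ×ˢ Finset.univ).filter (fun x : Fin p × Fin p => x.1 ≠ x.2) := by ext; simp
    rw [hoff, Finset.prod_filter, Finset.prod_product]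
    have hrow : ∀ i : Fin p, (∏ j : Fin p,
        if i ≠ j then (((i : ℕ) : ZMod p) - ((j : ℕ) : ZMod p)) else 1) = -1 := by
      intro i
      rw [← Finset.prod_filter, Finset.filter_ne]
      exact inner_prod p i
    rw [Finset.prod_congr rfl (fun i _ => hrow i), Finset.prod_const,
      Finset.card_univ, Fintype.card_fin]
    exact hodd.neg_one_pow
  rw [hsplit]
  ring

lemma X_pow_not_mem (p : ℕ) (hp : p.Prime) (N : ℕ) :
    (Polynomial.X : Polynomial ℤ) ^ N ∉
      Ideal.span {(p : Polynomial ℤ) * Polynomial.X} := by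
  intro h
  rw [Ideal.mem_span_singleton] at h
  obtain ⟨g, hg⟩ := h
  have hc := congrArg (fun q : Polynomial ℤ => q.coeff N) hg
  simp only [Polynomial.coeff_X_pow, if_pos rfl] at hc
  have : ((p : Polynomial ℤ) * Polynomial.X * g).coeff N
      = (p : ℤ) * (Polynomial.X * g).coeff N := by
    rw [mul_assoc]
    have : ((p : ℕ) : Polynomial ℤ) = Polynomial.C ((p : ℕ) : ℤ) := by rfl
    rw [this, Polynomial.coeff_C_mul]
  rw [this] at hc
  have hdvd : (p : ℤ) ∣ 1 := ⟨_, hc⟩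
  have := Int.le_of_dvd one_pos hdvd
  have := hp.two_le
  omega

/-- For δ = ∏_{i≠j}(v_i − v_j) and Θ_p : ℤ[v_1,…,v_p] → ℤ[η]/(pη), v_i ↦ i·η
(for p an odd prime), one has Θ_p(δ) = −η^{p²−p}, which is nonzero. -/
theorem theta_delta (p : ℕ) (hp : p.Prime) (hodd : Odd p) :
    (aeval (fun i : Fin p => ((i : ℕ) + 1) • eta p)
        (∏ x ∈ Finset.univ.offDiag, (X x.1 - X x.2 : MvPolynomial (Fin p) ℤ)) =
      -(eta p) ^ (p ^ 2 - p)) ∧ -(eta p) ^ (p ^ 2 - p) ≠ 0 := by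
  set I : Ideal (Polynomial ℤ) := Ideal.span {(p : Polynomial ℤ) * Polynomial.X} with hI
  set N : ℕ := p ^ 2 - p with hN
  have hN1 : 1 ≤ N := by
    have := hp.two_le
    have : p ≤ p ^ 2 := by nlinarith
    have h2 : 2 ≤ p := hp.two_le
    have : p + 1 ≤ p ^ 2 := by nlinarith
    omega
  set c : ℤ := ∏ x ∈ (Finset.univ : Finset (Fin p)).offDiag,
      (((x.1 : ℕ) : ℤ) - ((x.2 : ℕ) : ℤ)) with hc
  set mkA : Polynomial ℤ →ₐ[ℤ] Rq p := Ideal.Quotient.mkₐ ℤ I with hmkA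
  -- rewrite the evaluation point
  have hfun : (fun i : Fin p => ((i : ℕ) + 1) • eta p)
      = fun i : Fin p => mkA ((((i : ℕ) : ℤ) + 1) • Polynomial.X) := by
    funext i
    have : ((((i : ℕ) : ℤ) + 1) • (Polynomial.X : Polynomial ℤ))
        = (((i : ℕ) + 1 : ℕ) : ℤ) • Polynomial.X := by push_cast; ring_nf
    rw [this, map_zsmul]
    have : ((((i : ℕ) + 1 : ℕ) : ℤ)) • mkA Polynomial.X
        = ((i : ℕ) + 1) • mkA Polynomial.X := by
      rw [natCast_zsmul]
    rw [this]
    rfl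
  have haev : aeval (fun i : Fin p => ((i : ℕ) + 1) • eta p)
        (∏ x ∈ Finset.univ.offDiag, (X x.1 - X x.2 : MvPolynomial (Fin p) ℤ))
      = mkA (aeval (fun i : Fin p => (((i : ℕ) : ℤ) + 1) • Polynomial.X)
        (∏ x ∈ Finset.univ.offDiag, (X x.1 - X x.2 : MvPolynomial (Fin p) ℤ))) := by
    rw [hfun, comp_aeval_apply]
  -- compute the polynomial evaluation
  have hpoly : aeval (fun i : Fin p => (((i : ℕ) : ℤ) + 1) • Polynomial.X)
        (∏ x ∈ Finset.univ.offDiag, (X x.1 - X x.2 : MvPolynomial (Fin p) ℤ))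
      = Polynomial.C c * Polynomial.X ^ N := by
    rw [map_prod]
    have hfac : ∀ x ∈ (Finset.univ : Finset (Fin p)).offDiag,
        aeval (fun i : Fin p => (((i : ℕ) : ℤ) + 1) • Polynomial.X)
          (X x.1 - X x.2 : MvPolynomial (Fin p) ℤ)
        = Polynomial.C (((x.1 : ℕ) : ℤ) - ((x.2 : ℕ) : ℤ)) * Polynomial.X := by
      intro x _
      rw [map_sub, aeval_X, aeval_X]
      have hd : ((x.1 : ℕ) : ℤ) - ((x.2 : ℕ) : ℤ)
          = (((x.1 : ℕ) : ℤ) + 1) - (((x.2 : ℕ) : ℤ) + 1) := by ring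
      rw [hd, Polynomial.C_sub, sub_mul, zsmul_eq_mul, zsmul_eq_mul]
      norm_cast
    rw [Finset.prod_congr rfl hfac, Finset.prod_mul_distrib, ← map_prod,
      Finset.prod_const, ← hc, Finset.offDiag_card, Finset.card_univ, Fintype.card_fin]
    congr 1
    rw [hN]; ring_nf
  -- main equality
  have hmain : mkA (Polynomial.C c * Polynomial.X ^ N) = -(eta p) ^ N := by
    have hη : -(eta p) ^ N = mkA (-(Polynomial.X ^ N)) := by
      simp only [hmkA, map_neg, map_pow]
      rfl
    rw [hη]
    have : mkA (Polynomial.C c * Polynomial.X ^ N) = mkA (-(Polynomial.X ^ N))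
        ↔ Polynomial.C c * Polynomial.X ^ N - -(Polynomial.X ^ N) ∈ I := by
      constructor
      · intro h
        have := Ideal.Quotient.eq.mp h
        exact this
      · intro h
        exact Ideal.Quotient.eq.mpr h
    rw [this]
    obtain ⟨k, hk⟩ := key_dvd p hp hodd
    rw [← hc] at hk
    have heq : Polynomial.C c * Polynomial.X ^ N - -(Polynomial.X ^ N)
        = ((p : Polynomial ℤ) * Polynomial.X) * (Polynomial.C k * Polynomial.X ^ (N - 1)) := by
      have hXN : (Polynomial.X : Polynomial ℤ) ^ N
          = Polynomial.X * Polynomial.X ^ (N - 1) := by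
        rw [← pow_succ']
        congr 1
        omega
      have hCp : ((p : ℕ) : Polynomial ℤ) = Polynomial.C ((p : ℕ) : ℤ) := by
        rfl
      rw [hXN, hCp]
      have : Polynomial.C c + 1 = Polynomial.C ((p : ℤ) * k) := by
        rw [← hk, map_add, map_one]
      calc Polynomial.C c * (Polynomial.X * Polynomial.X ^ (N - 1))
            - -(Polynomial.X * Polynomial.X ^ (N - 1))
          = (Polynomial.C c + 1) * (Polynomial.X * Polynomial.X ^ (N - 1)) := by ring
        _ = Polynomial.C ((p : ℤ) * k) * (Polynomial.X * Polynomial.X ^ (N - 1)) := by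
            rw [this]
        _ = Polynomial.C ((p : ℤ)) * Polynomial.X
            * (Polynomial.C k * Polynomial.X ^ (N - 1)) := by
            rw [map_mul]; ring
    rw [heq]
    exact Ideal.mul_mem_right _ _ (Ideal.subset_span rfl)
  constructor
  · rw [haev, hpoly, hmain]
  · intro h
    rw [neg_eq_zero] at h
    have : (Polynomial.X : Polynomial ℤ) ^ N ∈ I := by
      rw [← Ideal.Quotient.eq_zero_iff_mem]
      have : (Ideal.Quotient.mk I) (Polynomial.X ^ N) = (eta p) ^ N := by
        rw [map_pow]; rfl
      rw [this, h]
    exact X_pow_not_mem p hp N this
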